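/- Let σ be a type (the alphabet). Let (W, δ', w₀) and (W', δ'', w₀') be two pointed partial deterministic labeled graphs over σ with W and W' finite, each satisfying: (i) every state is reachable from the start state, i.e. for every s : W there is a word w with reach δ' w₀ w = some s (and similarly for W'); and (ii) any two distinct states are distinguishable, i.e. for s ≠ t there is a word traversable from exactly one of them. If w₀ and w₀' are indistinguishable (exactly the same words are traversable from w₀ with respect to δ' as from w₀' with respect to δ''), then there is a bijection e : W ≃ W' with e w₀ = w₀' that commutes with the transitions: for every state s : W and letter a : σ, Option.map e (δ' s a) = δ'' (e s) a. In other words, the minimum base graph is unique up to isomorphism. -/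

import Mathlib

/-- The state reached (if any) by following the word `w` from state `v` in the partial
deterministic labeled graph `δ`. -/
def reach {V σ : Type*} (δ : V → σ → Option V) : V → List σ → Option V
  | v, [] => some v
  | v, a :: w => (δ v a).bind (fun u => reach δ u w)

theorem reach_singleton {V σ : Type*} (δ : V → σ → Option V) (v : V) (a : σ) :
    reach δ v [a] = δ v a := by
  simp [reach]

theorem reach_append {V σ : Type*} (δ : V → σ → Option V) (u w : List σ) (v : V) :
    reach δ v (u ++ w) = (reach δ v u).bind (fun s => reach δ s w) := by
  induction u generalizing v with
  | nil => simp [reach]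
  | cons a u ih =>
    simp only [List.cons_append, reach]
    cases δ v a <;> simp [ih]

/-- Indistinguishability of states of two graphs. -/
def Ind {σ W W' : Type*} (δ' : W → σ → Option W) (δ'' : W' → σ → Option W')
    (s : W) (t : W') : Prop :=
  ∀ w : List σ, (reach δ' s w).isSome ↔ (reach δ'' t w).isSome

theorem ind_step {σ W W' : Type*} {δ' : W → σ → Option W} {δ'' : W' → σ → Option W'}
    {s : W} {t : W'} (h : Ind δ' δ'' s t) {u : List σ} {p : W}
    (hp : reach δ' s u = some p) :
    ∃ q : W', reach δ'' t u = some q ∧ Ind δ' δ'' p q := by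
  have h1 : (reach δ'' t u).isSome := (h u).mp (by simp [hp])
  obtain ⟨q, hq⟩ := Option.isSome_iff_exists.mp h1
  refine ⟨q, hq, fun w => ?_⟩
  have := h (u ++ w)
  rw [reach_append, reach_append, hp, hq] at this
  simpa using this

/-- Uniqueness of the minimum base graph up to isomorphism: two pointed partial
deterministic labeled graphs in which every state is reachable from the start state and
any two distinct states are distinguishable, and whose start states are indistinguishable,
are isomorphic via a bijection that maps start state to start state and commutes with the
transitions. -/
theorem minimum_base_graph_unique {σ W W' : Type*} [Fintype W] [Fintype W']
    (δ' : W → σ → Option W) (δ'' : W' → σ → Option W') (w₀ : W) (w₀' : W')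
    (hreach : ∀ s : W, ∃ w : List σ, reach δ' w₀ w = some s)
    (hreach' : ∀ s : W', ∃ w : List σ, reach δ'' w₀' w = some s)
    (hdist : ∀ s t : W, s ≠ t →
      ∃ w : List σ, ¬((reach δ' s w).isSome ↔ (reach δ' t w).isSome))
    (hdist' : ∀ s t : W', s ≠ t →
      ∃ w : List σ, ¬((reach δ'' s w).isSome ↔ (reach δ'' t w).isSome))
    (hind : ∀ w : List σ, (reach δ' w₀ w).isSome ↔ (reach δ'' w₀' w).isSome) :
    ∃ e : W ≃ W', e w₀ = w₀' ∧
      ∀ (s : W) (a : σ), Option.map e (δ' s a) = δ'' (e s) a := by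
  classical
  have hw : Ind δ' δ'' w₀ w₀' := hind
  have uniqR : ∀ (s : W) (t t' : W'), Ind δ' δ'' s t → Ind δ' δ'' s t' → t = t' := by
    intro s t t' h1 h2
    by_contra hne
    obtain ⟨w, hw'⟩ := hdist' t t' hne
    exact hw' ((h1 w).symm.trans (h2 w))
  have uniqL : ∀ (s s' : W) (t : W'), Ind δ' δ'' s t → Ind δ' δ'' s' t → s = s' := by
    intro s s' t h1 h2
    by_contra hne
    obtain ⟨w, hw'⟩ := hdist s s' hne
    exact hw' ((h1 w).trans (h2 w).symm)
  choose f hf1 hf2 using fun s : W => ind_step hw (hreach s).choose_spec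
  have hinj : Function.Injective f := by
    intro s s' h
    exact uniqL s s' (f s) (hf2 s) (h ▸ hf2 s')
  have hsurj : Function.Surjective f := by
    intro t
    obtain ⟨u, hu⟩ := hreach' t
    have hw' : Ind δ'' δ' w₀' w₀ := fun w => (hw w).symm
    obtain ⟨p, _, hp2⟩ := ind_step hw' hu
    exact ⟨p, uniqR p (f p) t (hf2 p) (fun w => (hp2 w).symm)⟩
  refine ⟨Equiv.ofBijective f ⟨hinj, hsurj⟩, ?_, ?_⟩
  · exact uniqR w₀ (f w₀) w₀' (hf2 w₀) hw
  · intro s a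
    have hs : Ind δ' δ'' s (f s) := hf2 s
    cases hda : δ' s a with
    | none =>
      have : ¬ (reach δ'' (f s) [a]).isSome := by
        rw [← hs [a]]
        simp [reach_singleton, hda]
      rw [reach_singleton] at this
      simp only [Option.map_none]
      cases h : δ'' (f s) a with
      | none => simp [Equiv.ofBijective, h]
      | some q => rw [h] at this; simp at this
    | some t =>
      have hrt : reach δ' s [a] = some t := by rw [reach_singleton, hda]
      obtain ⟨q, hq1, hq2⟩ := ind_step hs hrt
      rw [reach_singleton] at hq1
      have : f t = q := uniqR t (f t) q (hf2 t) hq2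
      simp [Equiv.ofBijective, hq1, ← this]
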